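/- Let X be a real Banach space, M ⊆ X a bounded set and ε ≥ 0. If M is ε-relatively weakly compact, then M is 2ε-weakly precompact. -/

import Mathlib

open Filter Topology NormedSpace

/-- `δ((x_n)) ≤ ε`: for every functional in the closed unit ball of the dual,
`limsup x*(x_n) − liminf x*(x_n) ≤ ε`. -/
def DeltaLE {E : Type*} [NormedAddCommGroup E] [NormedSpace ℝ E] (x : ℕ → E) (ε : ℝ) : Prop :=
  ∀ f : E →L[ℝ] ℝ, ‖f‖ ≤ 1 →
    Filter.limsup (fun n => f (x n)) Filter.atTop
      - Filter.liminf (fun n => f (x n)) Filter.atTop ≤ ε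

/-- A set `M` is `ε`-weakly precompact if it is bounded and every sequence in `M`
admits a subsequence `(x_{n_k})` with `δ((x_{n_k})) ≤ ε`. -/
def IsWeaklyPrecompactWith {E : Type*} [NormedAddCommGroup E] [NormedSpace ℝ E]
    (ε : ℝ) (M : Set E) : Prop :=
  Bornology.IsBounded M ∧
    ∀ x : ℕ → E, (∀ n, x n ∈ M) →
      ∃ φ : ℕ → ℕ, StrictMono φ ∧ DeltaLE (fun k => x (φ k)) ε

/-- A bounded set `M` is `ε`-relatively weakly compact if the weak*-closure of `J(M)`
in the bidual is contained in `J(X) + ε B_{X**}`, where `J` is the canonical embedding. -/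
def IsRelWeaklyCompactWith {E : Type*} [NormedAddCommGroup E] [NormedSpace ℝ E]
    (ε : ℝ) (M : Set E) : Prop :=
  Bornology.IsBounded M ∧
    ∀ z : StrongDual ℝ (StrongDual ℝ E),
      StrongDual.toWeakDual z ∈
        closure (StrongDual.toWeakDual '' (inclusionInDoubleDual ℝ E '' M)) →
      ∃ x : E, ‖z - inclusionInDoubleDual ℝ E x‖ ≤ ε

namespace RWPaux

/-- The filter of "large elements inside `A`". -/
def FF (A : Set ℕ) : Filter ℕ := atTop ⊓ 𝓟 A

lemma FF_neBot {A : Set ℕ} (hA : A.Infinite) : (FF A).NeBot := by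
  rw [FF, inf_principal_neBot_iff]
  intro U hU
  rcases mem_atTop_sets.mp hU with ⟨n, hn⟩
  rcases hA.exists_gt n with ⟨k, hkA, hk⟩
  exact ⟨k, hn k hk.le, hkA⟩

lemma FF_mono {A B : Set ℕ} (h : B ⊆ A) : FF B ≤ FF A :=
  inf_le_inf_left _ (principal_mono.mpr h)

lemma FF_inter_Ici (A : Set ℕ) (n : ℕ) : FF (A ∩ Set.Ici n) = FF A := by
  have h1 : atTop ⊓ 𝓟 (Set.Ici n) = (atTop : Filter ℕ) :=
    inf_eq_left.mpr (le_principal_iff.mpr (mem_atTop n))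
  calc atTop ⊓ 𝓟 (A ∩ Set.Ici n) = atTop ⊓ (𝓟 (Set.Ici n) ⊓ 𝓟 A) := by
        rw [← inf_principal, inf_comm (𝓟 A)]
    _ = (atTop ⊓ 𝓟 (Set.Ici n)) ⊓ 𝓟 A := by rw [inf_assoc]
    _ = atTop ⊓ 𝓟 A := by rw [h1]

variable {X : Type*} [NormedAddCommGroup X] [NormedSpace ℝ X]

lemma abs_eval_le (x : ℕ → X) {C : ℝ} (hC : ∀ n, ‖x n‖ ≤ C)
    {f : X →L[ℝ] ℝ} (hf : ‖f‖ ≤ 1) (k : ℕ) : |f (x k)| ≤ C := by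
  have h0 : (0:ℝ) ≤ C := le_trans (norm_nonneg _) (hC k)
  calc |f (x k)| ≤ ‖f‖ * ‖x k‖ := f.le_opNorm _
    _ ≤ 1 * C := by
        apply mul_le_mul hf (hC k) (norm_nonneg _) zero_le_one
    _ = C := one_mul C

lemma bddUnder_le (x : ℕ → X) {C : ℝ} (hC : ∀ n, ‖x n‖ ≤ C)
    {f : X →L[ℝ] ℝ} (hf : ‖f‖ ≤ 1) (F : Filter ℕ) :
    F.IsBoundedUnder (· ≤ ·) (fun k => f (x k)) :=
  isBoundedUnder_of ⟨C, fun k => (abs_le.mp (abs_eval_le x hC hf k)).2⟩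

lemma bddUnder_ge (x : ℕ → X) {C : ℝ} (hC : ∀ n, ‖x n‖ ≤ C)
    {f : X →L[ℝ] ℝ} (hf : ‖f‖ ≤ 1) (F : Filter ℕ) :
    F.IsBoundedUnder (· ≥ ·) (fun k => f (x k)) :=
  isBoundedUnder_of ⟨-C, fun k => (abs_le.mp (abs_eval_le x hC hf k)).1⟩

/-- oscillation of `f ∘ x` along `A`. -/
noncomputable def osc (x : ℕ → X) (f : X →L[ℝ] ℝ) (A : Set ℕ) : ℝ :=
  limsup (fun k => f (x k)) (FF A) - liminf (fun k => f (x k)) (FF A)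

/-- the `δ` quantity of the subsequence indexed by `A`. -/
noncomputable def del (x : ℕ → X) (A : Set ℕ) : ℝ :=
  ⨆ f : {f : X →L[ℝ] ℝ // ‖f‖ ≤ 1}, osc x f.1 A

instance : Nonempty {f : X →L[ℝ] ℝ // ‖f‖ ≤ 1} := ⟨⟨0, by simp⟩⟩

variable {x : ℕ → X} {C : ℝ}

lemma osc_nonneg (hC : ∀ n, ‖x n‖ ≤ C) {f : X →L[ℝ] ℝ} (hf : ‖f‖ ≤ 1)
    {A : Set ℕ} (hA : A.Infinite) : 0 ≤ osc x f A := by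
  have := FF_neBot hA
  have h := liminf_le_limsup (u := fun k => f (x k)) (f := FF A)
    (bddUnder_le x hC hf _) (bddUnder_ge x hC hf _)
  simp only [osc, sub_nonneg]
  exact h

lemma limsup_le_C (hC : ∀ n, ‖x n‖ ≤ C) {f : X →L[ℝ] ℝ} (hf : ‖f‖ ≤ 1)
    {A : Set ℕ} (hA : A.Infinite) :
    limsup (fun k => f (x k)) (FF A) ≤ C := by
  have := FF_neBot hA
  refine limsup_le_of_le ((bddUnder_ge x hC hf _).isCoboundedUnder_le) ?_
  exact Eventually.of_forall fun k => (abs_le.mp (abs_eval_le x hC hf k)).2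

lemma neg_C_le_liminf (hC : ∀ n, ‖x n‖ ≤ C) {f : X →L[ℝ] ℝ} (hf : ‖f‖ ≤ 1)
    {A : Set ℕ} (hA : A.Infinite) :
    -C ≤ liminf (fun k => f (x k)) (FF A) := by
  have := FF_neBot hA
  refine le_liminf_of_le ((bddUnder_le x hC hf _).isCoboundedUnder_ge) ?_
  exact Eventually.of_forall fun k => (abs_le.mp (abs_eval_le x hC hf k)).1

lemma osc_le_2C (hC : ∀ n, ‖x n‖ ≤ C) {f : X →L[ℝ] ℝ} (hf : ‖f‖ ≤ 1)
    {A : Set ℕ} (hA : A.Infinite) : osc x f A ≤ 2 * C := by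
  have h1 := limsup_le_C hC hf hA
  have h2 := neg_C_le_liminf hC hf hA
  simp only [osc]
  linarith

lemma osc_mono (hC : ∀ n, ‖x n‖ ≤ C) {f : X →L[ℝ] ℝ} (hf : ‖f‖ ≤ 1)
    {A B : Set ℕ} (hB : B.Infinite) (hBA : B ⊆ A) : osc x f B ≤ osc x f A := by
  have hBne := FF_neBot hB
  have hAne := FF_neBot (hB.mono hBA)
  have h1 : limsup (fun k => f (x k)) (FF B) ≤ limsup (fun k => f (x k)) (FF A) :=
    limsup_le_limsup_of_le (FF_mono hBA)
      ((bddUnder_ge x hC hf _).isCoboundedUnder_le) (bddUnder_le x hC hf _)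
  have h2 : liminf (fun k => f (x k)) (FF A) ≤ liminf (fun k => f (x k)) (FF B) :=
    liminf_le_liminf_of_le (FF_mono hBA)
      (bddUnder_ge x hC hf _) ((bddUnder_le x hC hf _).isCoboundedUnder_ge)
  simp only [osc]
  linarith

lemma bddAbove_oscSet (hC : ∀ n, ‖x n‖ ≤ C) {A : Set ℕ} (hA : A.Infinite) :
    BddAbove (Set.range fun f : {f : X →L[ℝ] ℝ // ‖f‖ ≤ 1} => osc x f.1 A) := by
  refine ⟨2 * C, ?_⟩
  rintro r ⟨f, rfl⟩
  exact osc_le_2C hC f.2 hA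

lemma osc_le_del (hC : ∀ n, ‖x n‖ ≤ C) {f : X →L[ℝ] ℝ} (hf : ‖f‖ ≤ 1)
    {A : Set ℕ} (hA : A.Infinite) : osc x f A ≤ del x A :=
  le_ciSup (bddAbove_oscSet hC hA) (⟨f, hf⟩ : {f : X →L[ℝ] ℝ // ‖f‖ ≤ 1})

lemma del_le {A : Set ℕ} {r : ℝ} (h0 : 0 ≤ r)
    (h : ∀ f : X →L[ℝ] ℝ, ‖f‖ ≤ 1 → osc x f A ≤ r) : del x A ≤ r := by
  refine ciSup_le fun f => h f.1 f.2

lemma del_nonneg (hC : ∀ n, ‖x n‖ ≤ C) {A : Set ℕ} (hA : A.Infinite) :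
    0 ≤ del x A := by
  have : osc x (0 : X →L[ℝ] ℝ) A ≤ del x A :=
    osc_le_del hC (by simp) hA
  have h0 : osc x (0 : X →L[ℝ] ℝ) A = 0 := by
    have := FF_neBot hA
    simp only [osc, ContinuousLinearMap.zero_apply]
    rw [limsup_const, liminf_const, sub_self]
  linarith

lemma del_mono (hC : ∀ n, ‖x n‖ ≤ C) {A B : Set ℕ} (hB : B.Infinite) (hBA : B ⊆ A) :
    del x B ≤ del x A :=
  ciSup_le fun f => (osc_mono hC f.2 hB hBA).trans (osc_le_del hC f.2 (hB.mono hBA))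

lemma osc_inter_Ici (f : X →L[ℝ] ℝ) (A : Set ℕ) (n : ℕ) :
    osc x f (A ∩ Set.Ici n) = osc x f A := by
  simp only [osc, FF_inter_Ici]

lemma del_inter_Ici (A : Set ℕ) (n : ℕ) : del x (A ∩ Set.Ici n) = del x A := by
  simp only [del, osc_inter_Ici]


/-! ### Part B: extraction of a hereditarily minimal subsequence -/

def delSet (x : ℕ → X) (A : Set ℕ) : Set ℝ := {r | ∃ B, (B ⊆ A ∧ B.Infinite) ∧ del x B = r}

lemma delSet_nonempty {A : Set ℕ} (hA : A.Infinite) : (delSet x A).Nonempty :=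
  ⟨del x A, A, ⟨subset_rfl, hA⟩, rfl⟩

lemma delSet_bddBelow (hC : ∀ n, ‖x n‖ ≤ C) (A : Set ℕ) : BddBelow (delSet x A) := by
  refine ⟨0, ?_⟩
  rintro r ⟨B, ⟨hBA, hBinf⟩, rfl⟩
  exact del_nonneg hC hBinf

lemma exists_next (x : ℕ → X) {A : Set ℕ} (hA : A.Infinite) {d : ℝ} (hd : 0 < d) :
    ∃ B, (B ⊆ A ∧ B.Infinite) ∧ del x B < sInf (delSet x A) + d := by
  obtain ⟨r, hrmem, hr⟩ := exists_lt_of_csInf_lt (delSet_nonempty (x := x) hA)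
    (lt_add_of_pos_right _ hd)
  obtain ⟨B, hB, rfl⟩ := hrmem
  exact ⟨B, hB, hr⟩

lemma one_div_succ_pos (n : ℕ) : (0:ℝ) < 1/(n+1) := by positivity

noncomputable def AA (x : ℕ → X) : ℕ → {A : Set ℕ // A.Infinite}
  | 0 => ⟨Set.univ, Set.infinite_univ⟩
  | n+1 => ⟨(exists_next x (AA x n).2 (one_div_succ_pos n)).choose,
      (exists_next x (AA x n).2 (one_div_succ_pos n)).choose_spec.1.2⟩

lemma AA_succ_subset (x : ℕ → X) (n : ℕ) : ((AA x (n+1)) : Set ℕ) ⊆ (AA x n : Set ℕ) :=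
  (exists_next x (AA x n).2 (one_div_succ_pos n)).choose_spec.1.1

lemma AA_succ_lt (x : ℕ → X) (n : ℕ) :
    del x (AA x (n+1) : Set ℕ) < sInf (delSet x (AA x n : Set ℕ)) + 1/(n+1) :=
  (exists_next x (AA x n).2 (one_div_succ_pos n)).choose_spec.2

lemma AA_mono (x : ℕ → X) {m n : ℕ} (h : m ≤ n) : ((AA x n) : Set ℕ) ⊆ (AA x m : Set ℕ) := by
  induction n with
  | zero => simp_all
  | succ n ih =>
    rcases Nat.eq_or_lt_of_le h with rfl | hlt
    · exact subset_rfl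
    · exact (AA_succ_subset x n).trans (ih (by omega))

noncomputable def aseq (x : ℕ → X) : (n : ℕ) → {k : ℕ // k ∈ ((AA x (n+1)) : Set ℕ)}
  | 0 => ⟨((AA x 1).2.nonempty).choose, ((AA x 1).2.nonempty).choose_spec⟩
  | n+1 => ⟨((AA x (n+2)).2.exists_gt (aseq x n).1).choose,
      ((AA x (n+2)).2.exists_gt (aseq x n).1).choose_spec.1⟩

noncomputable def af (x : ℕ → X) (n : ℕ) : ℕ := (aseq x n).1

lemma af_mem (x : ℕ → X) (n : ℕ) : af x n ∈ ((AA x (n+1)) : Set ℕ) := (aseq x n).2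

lemma af_strict (x : ℕ → X) : StrictMono (af x) := by
  apply strictMono_nat_of_lt_succ
  intro n
  exact ((AA x (n+2)).2.exists_gt (aseq x n).1).choose_spec.2

lemma inter_Ici_infinite_of_strictMono {a : ℕ → ℕ} (ha : StrictMono a) (n : ℕ) :
    (Set.range a ∩ Set.Ici (a n)).Infinite := by
  have h : a '' (Set.Ici n) ⊆ Set.range a ∩ Set.Ici (a n) := by
    rintro k ⟨m, hm, rfl⟩
    exact ⟨⟨m, rfl⟩, ha.le_iff_le.mpr hm⟩
  exact ((Set.Ici_infinite n).image (ha.injective.injOn)).mono h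

lemma exists_min_subseq (x : ℕ → X) (hC : ∀ n, ‖x n‖ ≤ C) :
    ∃ a : ℕ → ℕ, StrictMono a ∧
      ∀ B, B ⊆ Set.range a → B.Infinite → del x (Set.range a) ≤ del x B := by
  refine ⟨af x, af_strict x, ?_⟩
  intro B hBr hBinf
  have key : ∀ n : ℕ, del x (Set.range (af x)) ≤ del x B + 1/(n+1) := by
    intro n
    have h1 : Set.range (af x) ∩ Set.Ici (af x (n+1)) ⊆ ((AA x (n+2)) : Set ℕ) := by
      rintro k ⟨⟨m, rfl⟩, hk⟩
      have hm : n+1 ≤ m := by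
        by_contra hm
        push_neg at hm
        exact absurd hk (not_le.mpr (af_strict x hm))
      exact AA_mono x (by omega) (af_mem x m)
    have h3 := inter_Ici_infinite_of_strictMono (af_strict x) (n+1)
    have h4 : del x (Set.range (af x) ∩ Set.Ici (af x (n+1))) ≤ del x ((AA x (n+2)) : Set ℕ) :=
      del_mono hC h3 h1
    have h2 : del x (Set.range (af x)) = del x (Set.range (af x) ∩ Set.Ici (af x (n+1))) :=
      (del_inter_Ici _ _).symm
    have h5 := AA_succ_lt x (n+1)
    have h6 : B ∩ Set.Ici (af x n) ⊆ ((AA x (n+1)) : Set ℕ) := by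
      rintro k ⟨hkB, hk⟩
      obtain ⟨m, rfl⟩ := hBr hkB
      have hm : n ≤ m := by
        by_contra hm
        push_neg at hm
        exact absurd hk (not_le.mpr (af_strict x hm))
      exact AA_mono x (by omega) (af_mem x m)
    have h7 : (B ∩ Set.Ici (af x n)).Infinite := by
      have : B \ Set.Iio (af x n) = B ∩ Set.Ici (af x n) := by
        ext k; simp [Set.mem_diff, Set.mem_Iio, Set.mem_Ici, not_lt]
      rw [← this]
      exact hBinf.diff (Set.finite_Iio _)
    have h8 : sInf (delSet x ((AA x (n+1)) : Set ℕ)) ≤ del x (B ∩ Set.Ici (af x n)) :=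
      csInf_le (delSet_bddBelow hC _) ⟨B ∩ Set.Ici (af x n), ⟨h6, h7⟩, rfl⟩
    have h9 : del x (B ∩ Set.Ici (af x n)) = del x B := del_inter_Ici _ _
    have h10 : (1:ℝ)/(n+1+1) ≤ 1/(n+1) := by
      apply one_div_le_one_div_of_le <;> push_cast <;> linarith
    push_cast at h5
    linarith
  by_contra hcon
  push_neg at hcon
  obtain ⟨n, hn⟩ := exists_nat_one_div_lt (ε := del x (Set.range (af x)) - del x B) (by linarith)
  have := key n
  linarith


/-! ### Part C: the kill-loop -/

lemma KL {γ : Type*} [DecidableEq γ] (Act : γ → Set ℕ → Prop)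
    (hmono : ∀ q B B', B ⊆ B' → Act q B → Act q B')
    (G : Finset γ) :
    ∀ T : Set ℕ, T.Infinite → (∀ B, B ⊆ T → B.Infinite → ∃ q ∈ G, Act q B) →
    ∃ q ∈ G, ∃ T', T' ⊆ T ∧ T'.Infinite ∧ ∀ B, B ⊆ T' → B.Infinite → Act q B := by
  induction G using Finset.strongInduction with
  | _ G ih =>
    intro T hT hAll
    obtain ⟨q₀, hq₀G, -⟩ := hAll T subset_rfl hT
    by_cases hq : ∃ B, B ⊆ T ∧ B.Infinite ∧ ¬ Act q₀ B
    · obtain ⟨B₀, hB₀T, hB₀inf, hB₀bad⟩ := hq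
      have hAll' : ∀ B, B ⊆ B₀ → B.Infinite → ∃ q ∈ G.erase q₀, Act q B := by
        intro B hBsub hBinf
        obtain ⟨q, hqG, hqA⟩ := hAll B (hBsub.trans hB₀T) hBinf
        refine ⟨q, Finset.mem_erase.mpr ⟨?_, hqG⟩, hqA⟩
        rintro rfl
        exact hB₀bad (hmono q B B₀ hBsub hqA)
      obtain ⟨q, hqmem, T', hT'sub, hT'inf, hQ⟩ :=
        ih (G.erase q₀) (Finset.erase_ssubset hq₀G) B₀ hB₀inf hAll'
      exact ⟨q, Finset.mem_of_mem_erase hqmem, T', hT'sub.trans hB₀T, hT'inf, hQ⟩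
    · push_neg at hq
      exact ⟨q₀, hq₀G, T, subset_rfl, hT, fun B hBsub hBinf => hq B hBsub hBinf⟩

/-! ### Part D: construction of an independent subsequence -/

def PP (x : ℕ → X) (α β : ℝ) (I J : Finset ℕ) (B : Set ℕ) : Prop :=
  ∃ f : X →L[ℝ] ℝ, ‖f‖ ≤ 1 ∧ (∀ i ∈ I, β ≤ f (x i)) ∧ (∀ j ∈ J, f (x j) ≤ α) ∧
    {k ∈ B | β ≤ f (x k)}.Infinite ∧ {k ∈ B | f (x k) ≤ α}.Infinite

def HP (x : ℕ → X) (α β : ℝ) (I J : Finset ℕ) (B : Set ℕ) : Prop :=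
  ∀ B', B' ⊆ B → B'.Infinite → PP x α β I J B'

lemma PP_mono {x : ℕ → X} {α β : ℝ} {I J : Finset ℕ} {B B' : Set ℕ} (h : B ⊆ B') :
    PP x α β I J B → PP x α β I J B' := by
  rintro ⟨f, h1, h2, h3, h4, h5⟩
  exact ⟨f, h1, h2, h3, h4.mono (fun k hk => ⟨h hk.1, hk.2⟩),
    h5.mono (fun k hk => ⟨h hk.1, hk.2⟩)⟩

lemma HP_mono {x : ℕ → X} {α β : ℝ} {I J : Finset ℕ} {B B' : Set ℕ} (h : B' ⊆ B) :
    HP x α β I J B → HP x α β I J B' :=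
  fun hH B'' h'' hinf => hH B'' (h''.trans h) hinf

lemma lemA (x : ℕ → X) (α β : ℝ) (I J : Finset ℕ) {B : Set ℕ} (hB : B.Infinite)
    (hHP : HP x α β I J B) :
    ∃ B', B' ⊆ B ∧ B'.Infinite ∧
      ∀ k ∈ B', HP x α β (insert k I) J B' ∧ HP x α β I (insert k J) B' := by
  classical
  by_contra hcon
  push_neg at hcon
  have step : ∀ B', B' ⊆ B → B'.Infinite →
      ∃ p : ℕ × Bool × Set ℕ, p.1 ∈ B' ∧ p.2.2 ⊆ B' ∧ p.2.2.Infinite ∧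
        p.2.2 ⊆ Set.Ioi p.1 ∧
        ¬ PP x α β (if p.2.1 then insert p.1 I else I)
          (if p.2.1 then J else insert p.1 J) p.2.2 := by
    intro B' hB'B hB'inf
    obtain ⟨k, hkB', hk⟩ := hcon B' hB'B hB'inf
    by_cases h1 : HP x α β (insert k I) J B'
    · have h2 : ¬ HP x α β I (insert k J) B' := by
        intro h2
        exact absurd h2 (by tauto)
      rw [HP] at h2
      push_neg at h2
      obtain ⟨B₂, hB₂sub, hB₂inf, hB₂bad⟩ := h2
      refine ⟨(k, false, B₂ ∩ Set.Ioi k), hkB', Set.inter_subset_left.trans hB₂sub, ?_,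
        Set.inter_subset_right, ?_⟩
      · have he : B₂ \ Set.Iic k = B₂ ∩ Set.Ioi k := by
          ext m; simp [Set.mem_Ioi, Set.mem_Iic, not_le]
        rw [← he]
        exact hB₂inf.diff (Set.finite_Iic k)
      · simp only [if_neg (Bool.false_ne_true)]
        intro hPP
        exact hB₂bad (PP_mono Set.inter_subset_left hPP)
    · rw [HP] at h1
      push_neg at h1
      obtain ⟨B₂, hB₂sub, hB₂inf, hB₂bad⟩ := h1
      refine ⟨(k, true, B₂ ∩ Set.Ioi k), hkB', Set.inter_subset_left.trans hB₂sub, ?_,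
        Set.inter_subset_right, ?_⟩
      · have he : B₂ \ Set.Iic k = B₂ ∩ Set.Ioi k := by
          ext m; simp [Set.mem_Ioi, Set.mem_Iic, not_le]
        rw [← he]
        exact hB₂inf.diff (Set.finite_Iic k)
      · simp only [if_pos rfl]
        intro hPP
        exact hB₂bad (PP_mono Set.inter_subset_left hPP)
  -- package states
  let σ := {p : ℕ × Bool × Set ℕ // p.1 ∈ B ∧ p.2.2 ⊆ B ∧ p.2.2.Infinite ∧
    p.2.2 ⊆ Set.Ioi p.1 ∧
    ¬ PP x α β (if p.2.1 then insert p.1 I else I)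
      (if p.2.1 then J else insert p.1 J) p.2.2}
  have hstep : ∀ s : σ, ∃ t : σ, t.1.1 ∈ s.1.2.2 ∧ t.1.2.2 ⊆ s.1.2.2 := by
    rintro ⟨⟨k, b, Bc⟩, hmem, hsub, hinf, hIoi, hbad⟩
    obtain ⟨p, hp1, hp2, hp3, hp4, hp5⟩ := step Bc hsub hinf
    exact ⟨⟨p, hsub hp1, hp2.trans hsub, hp3, hp4, hp5⟩, hp1, hp2⟩
  have hs₀ : ∃ s : σ, True := by
    obtain ⟨p, hp1, hp2, hp3, hp4, hp5⟩ := step B subset_rfl hB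
    exact ⟨⟨p, hp1, hp2, hp3, hp4, hp5⟩, trivial⟩
  obtain ⟨s₀, -⟩ := hs₀
  obtain ⟨g, hg0, hgR⟩ : ∃ g : ℕ → σ, g 0 = s₀ ∧
      ∀ n, g (n+1) = (hstep (g n)).choose :=
    ⟨fun n => Nat.rec s₀ (fun _ s => (hstep s).choose) n, rfl, fun _ => rfl⟩
  have hR : ∀ n, (g (n+1)).1.1 ∈ (g n).1.2.2 ∧ (g (n+1)).1.2.2 ⊆ (g n).1.2.2 := by
    intro n
    rw [hgR n]
    exact (hstep (g n)).choose_spec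
  set kf : ℕ → ℕ := fun n => (g n).1.1 with hkf
  set sd : ℕ → Bool := fun n => (g n).1.2.1 with hsd
  set Bn : ℕ → Set ℕ := fun n => (g n).1.2.2 with hBn
  have hlt : ∀ n, kf n < kf (n+1) := fun n => (g n).2.2.2.2.1 (hR n).1
  have hkstrict : StrictMono kf := strictMono_nat_of_lt_succ hlt
  have hchain : ∀ n m, n ≤ m → Bn m ⊆ Bn n := by
    intro n m h
    induction h with
    | refl => exact subset_rfl
    | step _ ih => exact (hR _).2.trans ih
  have hkin : ∀ n m, n < m → kf m ∈ Bn n := by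
    intro n m h
    obtain ⟨d, rfl⟩ : ∃ d, m = n + d + 1 := ⟨m - n - 1, by omega⟩
    exact hchain n (n + d) (by omega) ((hR (n + d)).1)
  have hkB : ∀ n, kf n ∈ B := fun n => (g n).2.1
  have hBad : ∀ n, ¬ PP x α β (if sd n then insert (kf n) I else I)
      (if sd n then J else insert (kf n) J) (Bn n) := fun n => (g n).2.2.2.2.2
  -- pigeonhole
  have hpig : {n | sd n = true}.Infinite ∨ {n | sd n = false}.Infinite := by
    by_contra hcb
    push_neg at hcb
    have huniv : (Set.univ : Set ℕ) ⊆ {n | sd n = true} ∪ {n | sd n = false} := by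
      intro n _
      cases hb : sd n
      · exact Or.inr hb
      · exact Or.inl hb
    exact Set.infinite_univ ((hcb.1.union hcb.2).subset huniv)
  have main : ∀ b : Bool, {n | sd n = b}.Infinite → False := by
    intro b hSinf
    set S := {n | sd n = b} with hS
    have hKBinf : (kf '' S).Infinite := hSinf.image (hkstrict.injective.injOn)
    have hKBsub : kf '' S ⊆ B := by
      rintro k ⟨n, -, rfl⟩
      exact hkB n
    obtain ⟨f, hf1, hfI, hfJ, htop, hbot⟩ := hHP (kf '' S) hKBsub hKBinf
    have hfin : ((↑I : Set ℕ) ∪ ↑J).Finite := (I.finite_toSet.union J.finite_toSet)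
    have htopBn : ∀ n₀ : ℕ, {k ∈ Bn n₀ | β ≤ f (x k)}.Infinite := by
      intro n₀
      have hsub : {k ∈ kf '' S | β ≤ f (x k)} \ (kf '' Set.Iic n₀) ⊆
          {k ∈ Bn n₀ | β ≤ f (x k)} := by
        rintro k ⟨⟨⟨m, hmS, rfl⟩, hkβ⟩, hnot⟩
        refine ⟨hkin n₀ m ?_, hkβ⟩
        by_contra hm
        push_neg at hm
        exact hnot ⟨m, hm, rfl⟩
      exact ((htop.diff ((Set.finite_Iic n₀).image kf)).mono hsub)
    have hbotBn : ∀ n₀ : ℕ, {k ∈ Bn n₀ | f (x k) ≤ α}.Infinite := by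
      intro n₀
      have hsub : {k ∈ kf '' S | f (x k) ≤ α} \ (kf '' Set.Iic n₀) ⊆
          {k ∈ Bn n₀ | f (x k) ≤ α} := by
        rintro k ⟨⟨⟨m, hmS, rfl⟩, hkα⟩, hnot⟩
        refine ⟨hkin n₀ m ?_, hkα⟩
        by_contra hm
        push_neg at hm
        exact hnot ⟨m, hm, rfl⟩
      exact ((hbot.diff ((Set.finite_Iic n₀).image kf)).mono hsub)
    cases b
    · -- sd = false : pick bottom witness, contradict ¬ PP I (insert k J)
      obtain ⟨k₀, hk₀mem, hk₀not⟩ := (hbot.diff hfin).nonempty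
      obtain ⟨n₀, hn₀S, rfl⟩ := hk₀mem.1
      have hBadn := hBad n₀
      rw [hn₀S] at hBadn
      simp only [if_neg Bool.false_ne_true] at hBadn
      apply hBadn
      refine ⟨f, hf1, hfI, ?_, htopBn n₀, hbotBn n₀⟩
      intro j hj
      rcases Finset.mem_insert.mp hj with rfl | hj
      · exact hk₀mem.2
      · exact hfJ j hj
    · -- sd = true : pick top witness, contradict ¬ PP (insert k I) J
      obtain ⟨k₀, hk₀mem, hk₀not⟩ := (htop.diff hfin).nonempty
      obtain ⟨n₀, hn₀S, rfl⟩ := hk₀mem.1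
      have hBadn := hBad n₀
      rw [hn₀S] at hBadn
      simp only [if_pos rfl] at hBadn
      apply hBadn
      refine ⟨f, hf1, ?_, hfJ, htopBn n₀, hbotBn n₀⟩
      intro i hi
      rcases Finset.mem_insert.mp hi with rfl | hi
      · exact hk₀mem.2
      · exact hfI i hi
  rcases hpig with hp | hp
  · exact main true hp
  · exact main false hp


lemma lemA' (x : ℕ → X) (α β : ℝ) (PS : Finset (Finset ℕ × Finset ℕ)) {B : Set ℕ}
    (hB : B.Infinite) (hHP : ∀ p ∈ PS, HP x α β p.1 p.2 B) :
    ∃ B', B' ⊆ B ∧ B'.Infinite ∧ ∀ k ∈ B', ∀ p ∈ PS,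
      HP x α β (insert k p.1) p.2 B' ∧ HP x α β p.1 (insert k p.2) B' := by
  classical
  induction PS using Finset.induction_on generalizing B with
  | empty => exact ⟨B, subset_rfl, hB, by simp⟩
  | insert _ _ hq ih =>
    rename_i q PS
    obtain ⟨B₁, hB₁sub, hB₁inf, hB₁⟩ := ih hB (fun p hp => hHP p (Finset.mem_insert_of_mem hp))
    obtain ⟨B₂, hB₂sub, hB₂inf, hB₂⟩ := lemA x α β q.1 q.2 hB₁inf
      (HP_mono hB₁sub (hHP q (Finset.mem_insert_self _ _)))
    refine ⟨B₂, hB₂sub.trans hB₁sub, hB₂inf, ?_⟩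
    intro k hk p hp
    rcases Finset.mem_insert.mp hp with rfl | hp
    · exact hB₂ k hk
    · obtain ⟨h1, h2⟩ := hB₁ k (hB₂sub hk) p hp
      exact ⟨HP_mono hB₂sub h1, HP_mono hB₂sub h2⟩

lemma exists_indep (x : ℕ → X) (α β : ℝ) {T : Set ℕ} (hT : T.Infinite)
    (hact : ∀ B, B ⊆ T → B.Infinite → PP x α β ∅ ∅ B) :
    ∃ κ : ℕ → ℕ, StrictMono κ ∧
      ∀ I J : Finset ℕ, Disjoint I J →
        ∃ f : X →L[ℝ] ℝ, ‖f‖ ≤ 1 ∧ (∀ i ∈ I, β ≤ f (x (κ i))) ∧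
          (∀ j ∈ J, f (x (κ j)) ≤ α) := by
  classical
  let σ := {s : Set ℕ × List ℕ // s.1 ⊆ T ∧ s.1.Infinite ∧
    (∀ m ∈ s.2, ∀ c ∈ s.1, m < c) ∧
    (∀ I J : Finset ℕ, (↑I : Set ℕ) ⊆ {m | m ∈ s.2} → (↑J : Set ℕ) ⊆ {m | m ∈ s.2} →
      Disjoint I J → HP x α β I J s.1)}
  have hstep : ∀ s : σ, ∃ t : σ, ∃ κ, t.1.2 = κ :: s.1.2 ∧ κ ∈ s.1.1 ∧ t.1.1 ⊆ s.1.1 := by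
    rintro ⟨⟨Bc, L⟩, hsubT, hinf, hord, hpat⟩
    set PS : Finset (Finset ℕ × Finset ℕ) :=
      (L.toFinset.powerset ×ˢ L.toFinset.powerset).filter (fun p => Disjoint p.1 p.2) with hPS
    have hPSmem : ∀ p ∈ PS, HP x α β p.1 p.2 Bc := by
      intro p hp
      rw [hPS, Finset.mem_filter, Finset.mem_product] at hp
      refine hpat p.1 p.2 ?_ ?_ hp.2
      · intro m hm
        have := Finset.mem_powerset.mp hp.1.1 hm
        simpa using List.mem_toFinset.mp this
      · intro m hm
        have := Finset.mem_powerset.mp hp.1.2 hm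
        simpa using List.mem_toFinset.mp this
    obtain ⟨B', hB'sub, hB'inf, hB'⟩ := lemA' x α β PS hinf hPSmem
    obtain ⟨κ, hκB'⟩ := hB'inf.nonempty
    have hnewinf : (B' ∩ Set.Ioi κ).Infinite := by
      have he : B' \ Set.Iic κ = B' ∩ Set.Ioi κ := by
        ext m; simp [Set.mem_Ioi, Set.mem_Iic, not_le]
      rw [← he]
      exact hB'inf.diff (Set.finite_Iic κ)
    refine ⟨⟨(B' ∩ Set.Ioi κ, κ :: L), ?_, hnewinf, ?_, ?_⟩, κ, rfl, hB'sub hκB', Set.inter_subset_left.trans hB'sub⟩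
    · exact (Set.inter_subset_left.trans hB'sub).trans hsubT
    · intro m hm c hc
      rcases List.mem_cons.mp hm with rfl | hm
      · exact hc.2
      · exact hord m hm c (hB'sub hc.1)
    · intro I J hI hJ hIJ
      by_cases hκI : κ ∈ I
      · have hκJ : κ ∉ J := fun hκJ => (Finset.disjoint_left.mp hIJ hκI) hκJ
        have hI' : (↑(I.erase κ) : Set ℕ) ⊆ {m | m ∈ L} := by
          intro m hm
          have hm' := Finset.mem_erase.mp hm
          have := hI hm'.2
          rcases List.mem_cons.mp this with rfl | hmm
          · exact absurd rfl hm'.1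
          · exact hmm
        have hJ' : (↑J : Set ℕ) ⊆ {m | m ∈ L} := by
          intro m hm
          have := hJ hm
          rcases List.mem_cons.mp this with rfl | hmm
          · exact absurd hm hκJ
          · exact hmm
        have hmemPS : (I.erase κ, J) ∈ PS := by
          rw [hPS, Finset.mem_filter, Finset.mem_product]
          refine ⟨⟨Finset.mem_powerset.mpr ?_, Finset.mem_powerset.mpr ?_⟩,
            (Finset.disjoint_of_subset_left (Finset.erase_subset _ _) hIJ)⟩
          · intro m hm; exact List.mem_toFinset.mpr (hI' hm)
          · intro m hm; exact List.mem_toFinset.mpr (hJ' hm)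
        have := (hB' κ hκB' (I.erase κ, J) hmemPS).1
        rw [Finset.insert_erase hκI] at this
        exact HP_mono Set.inter_subset_left this
      by_cases hκJ : κ ∈ J
      · have hI' : (↑I : Set ℕ) ⊆ {m | m ∈ L} := by
          intro m hm
          have := hI hm
          rcases List.mem_cons.mp this with rfl | hmm
          · exact absurd hm hκI
          · exact hmm
        have hJ' : (↑(J.erase κ) : Set ℕ) ⊆ {m | m ∈ L} := by
          intro m hm
          have hm' := Finset.mem_erase.mp hm
          have := hJ hm'.2
          rcases List.mem_cons.mp this with rfl | hmm
          · exact absurd rfl hm'.1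
          · exact hmm
        have hmemPS : (I, J.erase κ) ∈ PS := by
          rw [hPS, Finset.mem_filter, Finset.mem_product]
          refine ⟨⟨Finset.mem_powerset.mpr ?_, Finset.mem_powerset.mpr ?_⟩,
            (Finset.disjoint_of_subset_right (Finset.erase_subset _ _) hIJ)⟩
          · intro m hm; exact List.mem_toFinset.mpr (hI' hm)
          · intro m hm; exact List.mem_toFinset.mpr (hJ' hm)
        have := (hB' κ hκB' (I, J.erase κ) hmemPS).2
        rw [Finset.insert_erase hκJ] at this
        exact HP_mono Set.inter_subset_left this
      · have hI' : (↑I : Set ℕ) ⊆ {m | m ∈ L} := by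
          intro m hm
          rcases List.mem_cons.mp (hI hm) with rfl | hmm
          · exact absurd hm hκI
          · exact hmm
        have hJ' : (↑J : Set ℕ) ⊆ {m | m ∈ L} := by
          intro m hm
          rcases List.mem_cons.mp (hJ hm) with rfl | hmm
          · exact absurd hm hκJ
          · exact hmm
        exact HP_mono (Set.inter_subset_left.trans hB'sub) (hpat I J hI' hJ' hIJ)
  have hσ₀ : ∃ s : σ, s.1.2 = [] := by
    refine ⟨⟨(T, []), subset_rfl, hT, by simp, ?_⟩, rfl⟩
    intro I J hI hJ hIJ
    have hIe : I = ∅ := by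
      rw [← Finset.coe_eq_empty]
      simpa using Set.subset_eq_empty hI (by ext m; simp)
    have hJe : J = ∅ := by
      rw [← Finset.coe_eq_empty]
      simpa using Set.subset_eq_empty hJ (by ext m; simp)
    subst hIe; subst hJe
    intro B' hB' hinf
    exact hact B' hB' hinf
  obtain ⟨s₀, hs₀L⟩ := hσ₀
  obtain ⟨g, hg0, hgR⟩ : ∃ g : ℕ → σ, g 0 = s₀ ∧
      ∀ n, g (n+1) = (hstep (g n)).choose :=
    ⟨fun n => Nat.rec s₀ (fun _ s => (hstep s).choose) n, rfl, fun _ => rfl⟩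
  have hR : ∀ n, ∃ κ, (g (n+1)).1.2 = κ :: (g n).1.2 ∧ κ ∈ (g n).1.1 ∧
      (g (n+1)).1.1 ⊆ (g n).1.1 := by
    intro n
    rw [hgR n]
    exact (hstep (g n)).choose_spec
  set κf : ℕ → ℕ := fun n => (g (n+1)).1.2.headI with hκf
  have hRκ : ∀ n, (g (n+1)).1.2 = κf n :: (g n).1.2 ∧ κf n ∈ (g n).1.1 ∧
      (g (n+1)).1.1 ⊆ (g n).1.1 := by
    intro n
    obtain ⟨κ, h1, h2, h3⟩ := hR n
    have : κf n = κ := by rw [hκf]; simp [h1]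
    rw [this]
    exact ⟨h1, h2, h3⟩
  have hLmem : ∀ n m, m < n → κf m ∈ (g n).1.2 := by
    intro n
    induction n with
    | zero => omega
    | succ n ih =>
      intro m hm
      rw [(hRκ n).1]
      rcases Nat.lt_succ_iff_lt_or_eq.mp hm with hm | rfl
      · exact List.mem_cons_of_mem _ (ih m hm)
      · exact List.mem_cons_self
  have hκstrict : StrictMono κf := by
    apply strictMono_nat_of_lt_succ
    intro n
    have h1 : κf n ∈ (g (n+1)).1.2 := hLmem (n+1) n (by omega)
    have h2 : κf (n+1) ∈ (g (n+1)).1.1 := (hRκ (n+1)).2.1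
    exact (g (n+1)).2.2.2.1 _ h1 _ h2
  refine ⟨κf, hκstrict, ?_⟩
  intro I J hIJ
  set n := (I ∪ J).sup id + 1 with hn
  have hImem : ∀ m ∈ I, κf m ∈ (g n).1.2 := by
    intro m hm
    refine hLmem n m ?_
    have : m ≤ (I ∪ J).sup id := Finset.le_sup (f := id) (Finset.mem_union_left _ hm)
    omega
  have hJmem : ∀ m ∈ J, κf m ∈ (g n).1.2 := by
    intro m hm
    refine hLmem n m ?_
    have : m ≤ (I ∪ J).sup id := Finset.le_sup (f := id) (Finset.mem_union_right _ hm)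
    omega
  have hdisj : Disjoint (I.image κf) (J.image κf) := by
    rw [Finset.disjoint_left]
    rintro k hkI hkJ
    obtain ⟨i, hi, rfl⟩ := Finset.mem_image.mp hkI
    obtain ⟨j, hj, hji⟩ := Finset.mem_image.mp hkJ
    have : j = i := hκstrict.injective hji
    subst this
    exact Finset.disjoint_left.mp hIJ hi hj
  have hHPn := (g n).2.2.2.2 (I.image κf) (J.image κf) ?_ ?_ hdisj
  · obtain ⟨f, hf1, hfI, hfJ, -, -⟩ := hHPn (g n).1.1 subset_rfl (g n).2.2.1
    refine ⟨f, hf1, ?_, ?_⟩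
    · intro i hi
      exact hfI (κf i) (Finset.mem_image_of_mem _ hi)
    · intro j hj
      exact hfJ (κf j) (Finset.mem_image_of_mem _ hj)
  · intro k hk
    obtain ⟨i, hi, rfl⟩ := Finset.mem_image.mp (by simpa using hk)
    exact hImem i hi
  · intro k hk
    obtain ⟨j, hj, rfl⟩ := Finset.mem_image.mp (by simpa using hk)
    exact hJmem j hj


/-! ### Part E: a cluster point of an independent sequence is far from the space -/

lemma hcl_mem {Y : Type*} [TopologicalSpace Y] {y : Y} {F : Filter Y} {S : Set Y}
    (hcp : ClusterPt y F) (hS : S ∈ F) : y ∈ closure S := by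
  rw [mem_closure_iff_clusterPt]
  exact hcp.mono (le_principal_iff.mpr hS)

def UIdx (U : Ultrafilter ℕ) : Type := {s : Set ℕ // s ∈ U}

instance (U : Ultrafilter ℕ) : Nonempty (UIdx U) := ⟨⟨Set.univ, Filter.univ_mem⟩⟩

instance (U : Ultrafilter ℕ) : SemilatticeSup (UIdx U) where
  le s t := t.1 ⊆ s.1
  le_refl s := subset_rfl
  le_trans a b c hab hbc := Set.Subset.trans hbc hab
  le_antisymm a b hab hba := Subtype.ext (subset_antisymm hba hab)
  sup s t := ⟨s.1 ∩ t.1, Filter.inter_mem s.2 t.2⟩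
  le_sup_left s t := Set.inter_subset_left
  le_sup_right s t := Set.inter_subset_right
  sup_le a b c hac hbc := Set.subset_inter hac hbc

lemma UIdx_le_def {U : Ultrafilter ℕ} {s t : UIdx U} (h : s ≤ t) : t.1 ⊆ s.1 := h

lemma no_indep (M : Set X) (ε : ℝ)
    (hclos : ∀ z : StrongDual ℝ (StrongDual ℝ X),
      StrongDual.toWeakDual z ∈
        closure (StrongDual.toWeakDual '' (inclusionInDoubleDual ℝ X '' M)) →
      ∃ x₀ : X, ‖z - inclusionInDoubleDual ℝ X x₀‖ ≤ ε)
    (w : ℕ → X) (hw : ∀ k, w k ∈ M) {C : ℝ} (hwC : ∀ k, ‖w k‖ ≤ C)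
    (α β : ℝ) (hgap : 2*ε < β - α)
    (FIN : ∀ I J : Finset ℕ, Disjoint I J →
      ∃ f : X →L[ℝ] ℝ, ‖f‖ ≤ 1 ∧ (∀ i ∈ I, β ≤ f (w i)) ∧ (∀ j ∈ J, f (w j) ≤ α)) :
    False := by
  classical
  set Jm := inclusionInDoubleDual ℝ X with hJm
  -- the closed unit ball of the dual, weak-star compact
  set Bd : Set (WeakDual ℝ X) := WeakDual.toStrongDual ⁻¹' Metric.closedBall 0 1 with hBd
  have hBdcomp : IsCompact Bd := WeakDual.isCompact_closedBall (0 : StrongDual ℝ X) 1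
  have hBd_mem : ∀ φ : WeakDual ℝ X, φ ∈ Bd ↔ ‖WeakDual.toStrongDual φ‖ ≤ 1 := by
    intro φ
    simp [hBd, Metric.mem_closedBall, dist_zero_right]
  -- the sets S_P
  set SS : Set ℕ → Set (WeakDual ℝ X) := fun P =>
    {φ | φ ∈ Bd ∧ (∀ k ∈ P, β ≤ φ (w k)) ∧ (∀ k ∉ P, φ (w k) ≤ α)} with hSS
  have hSSsub : ∀ P, SS P ⊆ Bd := fun P φ hφ => hφ.1
  have hSSne : ∀ P : Set ℕ, (SS P).Nonempty := by
    intro P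
    by_contra hne
    rw [Set.not_nonempty_iff_eq_empty] at hne
    set D : ℕ → Set (WeakDual ℝ X) := fun k =>
      {φ | if k ∈ P then β ≤ φ (w k) else φ (w k) ≤ α} with hD
    have hDclosed : ∀ k, IsClosed (D k) := by
      intro k
      by_cases hk : k ∈ P
      · simp only [hD, if_pos hk]
        exact IsClosed.preimage (WeakDual.eval_continuous (w k)) isClosed_Ici
      · simp only [hD, if_neg hk]
        exact IsClosed.preimage (WeakDual.eval_continuous (w k)) isClosed_Iic
    have hempty : Bd ∩ ⋂ k, D k = ∅ := by
      rw [← hne]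
      ext φ
      simp only [Set.mem_inter_iff, Set.mem_iInter, hSS, Set.mem_setOf_eq, hD]
      constructor
      · rintro ⟨h1, h2⟩
        refine ⟨h1, fun k hk => ?_, fun k hk => ?_⟩
        · have := h2 k; rwa [if_pos hk] at this
        · have := h2 k; rwa [if_neg hk] at this
      · rintro ⟨h1, h2, h3⟩
        refine ⟨h1, fun k => ?_⟩
        by_cases hk : k ∈ P
        · rw [if_pos hk]; exact h2 k hk
        · rw [if_neg hk]; exact h3 k hk
    obtain ⟨u, hu⟩ := hBdcomp.elim_finite_subfamily_closed D hDclosed hempty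
    obtain ⟨f, hf1, hfI, hfJ⟩ := FIN (u.filter (· ∈ P)) (u.filter (· ∉ P))
      (by
        rw [Finset.disjoint_left]
        intro k hk1 hk2
        exact (Finset.mem_filter.mp hk2).2 (Finset.mem_filter.mp hk1).2)
    have : (StrongDual.toWeakDual f) ∈ Bd ∩ ⋂ k ∈ u, D k := by
      constructor
      · rw [hBd_mem]
        simpa using hf1
      · simp only [Set.mem_iInter]
        intro k hk
        by_cases hkP : k ∈ P
        · simp only [hD, Set.mem_setOf_eq, if_pos hkP]
          exact hfI k (Finset.mem_filter.mpr ⟨hk, hkP⟩)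
        · simp only [hD, Set.mem_setOf_eq, if_neg hkP]
          exact hfJ k (Finset.mem_filter.mpr ⟨hk, hkP⟩)
    rw [hu] at this
    exact this
  -- the cluster point of the sequence in the bidual
  set gseq : ℕ → WeakDual ℝ (StrongDual ℝ X) := fun k => StrongDual.toWeakDual (Jm (w k)) with hgseq
  set C' : ℝ := max C 0 with hC'
  set Bd2 : Set (WeakDual ℝ (StrongDual ℝ X)) :=
    WeakDual.toStrongDual ⁻¹' Metric.closedBall 0 C' with hBd2
  have hBd2comp : IsCompact Bd2 := WeakDual.isCompact_closedBall (0 : StrongDual ℝ (StrongDual ℝ X)) C'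
  have hgmem : ∀ k, gseq k ∈ Bd2 := by
    intro k
    simp only [hBd2, Set.mem_preimage, Metric.mem_closedBall, dist_zero_right]
    have h1 : ‖Jm (w k)‖ ≤ ‖w k‖ := double_dual_bound ℝ X (w k)
    have := hwC k
    calc dist (WeakDual.toStrongDual (gseq k)) 0 = ‖Jm (w k)‖ := dist_zero_right (Jm (w k) : StrongDual ℝ (StrongDual ℝ X))
      _ ≤ C' := by simp only [hC']; exact le_max_of_le_left (h1.trans (hwC k))
  haveI : (Filter.map gseq (atTop : Filter ℕ)).NeBot := Filter.map_neBot
  obtain ⟨zW, hzmem, hzcl⟩ := hBd2comp.exists_clusterPt (f := Filter.map gseq atTop)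
    (le_principal_iff.mpr (Filter.mem_map.mpr (Filter.Eventually.of_forall hgmem)))
  set z : StrongDual ℝ (StrongDual ℝ X) := WeakDual.toStrongDual zW with hz
  have hzclos : StrongDual.toWeakDual z ∈
      closure (StrongDual.toWeakDual '' (inclusionInDoubleDual ℝ X '' M)) := by
    have h1 : zW ∈ closure (Set.range gseq) :=
      hcl_mem hzcl (Filter.range_mem_map (f := (atTop : Filter ℕ)) (m := gseq))
    have h2 : Set.range gseq ⊆ StrongDual.toWeakDual '' (inclusionInDoubleDual ℝ X '' M) := by
      rintro ψ ⟨k, rfl⟩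
      exact ⟨Jm (w k), ⟨w k, hw k, rfl⟩, rfl⟩
    have : StrongDual.toWeakDual z = zW := rfl
    rw [this]
    exact closure_mono h2 h1
  obtain ⟨x₀, hx₀⟩ := hclos z hzclos
  -- realize the cluster point along an ultrafilter
  have hmcp : MapClusterPt zW atTop gseq := hzcl
  obtain ⟨U, hUle, hUtend⟩ := mapClusterPt_iff_ultrafilter.mp hmcp
  have heval : ∀ φ : StrongDual ℝ X, Filter.Tendsto (fun k => φ (w k)) U (𝓝 (z φ)) := by
    intro φ
    have hcont : Continuous fun ψ : WeakDual ℝ (StrongDual ℝ X) => ψ φ :=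
      WeakDual.eval_continuous φ
    have h := (hcont.tendsto zW).comp hUtend
    have heq : (fun k => φ (w k)) = (fun ψ : WeakDual ℝ (StrongDual ℝ X) => ψ φ) ∘ gseq := by
      funext k
      simp only [Function.comp_apply, hgseq]
      exact (dual_def ℝ X (w k) φ).symm
    rw [heq]
    exact h
  set c : ℝ := (β - α)/2 with hc
  set δ' : ℝ := (c - ε)/2 with hδ'
  have hcε : ε < c := by rw [hc]; linarith
  have hδ'pos : 0 < δ' := by rw [hδ']; linarith
  have hbound : ∀ ψ : StrongDual ℝ X, ‖ψ‖ ≤ 1 → (z - Jm x₀) ψ ≤ ε := by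
    intro ψ hψ
    calc (z - Jm x₀) ψ ≤ |(z - Jm x₀) ψ| := le_abs_self _
      _ ≤ ‖z - Jm x₀‖ * ‖ψ‖ := (z - Jm x₀).le_opNorm ψ
      _ ≤ ε * 1 := by
          apply mul_le_mul hx₀ hψ (norm_nonneg _) (le_trans (norm_nonneg (z - Jm x₀)) hx₀)
      _ = ε := mul_one ε
  by_cases HC : ∃ s ∈ U, ∃ f₁ ∈ SS s, ∃ f₂ ∈ SS sᶜ, f₁ x₀ - f₂ x₀ ≤ 2*δ'
  · obtain ⟨s, hsU, f₁, hf₁, f₂, hf₂, hval⟩ := HC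
    set gD : StrongDual ℝ X :=
      (2⁻¹ : ℝ) • (WeakDual.toStrongDual f₁ - WeakDual.toStrongDual f₂) with hgD
    have happ : ∀ y : X, gD y = (f₁ y - f₂ y)/2 := by
      intro y
      simp only [hgD, ContinuousLinearMap.smul_apply, ContinuousLinearMap.sub_apply]
      have h1 : WeakDual.toStrongDual f₁ y = f₁ y := rfl
      have h2 : WeakDual.toStrongDual f₂ y = f₂ y := rfl
      rw [smul_eq_mul, h1, h2]
      ring
    have hgD1 : ‖gD‖ ≤ 1 := by
      rw [hgD]
      calc ‖(2⁻¹ : ℝ) • (WeakDual.toStrongDual f₁ - WeakDual.toStrongDual f₂)‖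
          = 2⁻¹ * ‖WeakDual.toStrongDual f₁ - WeakDual.toStrongDual f₂‖ := by
            rw [norm_smul]; norm_num
        _ ≤ 2⁻¹ * (‖WeakDual.toStrongDual f₁‖ + ‖WeakDual.toStrongDual f₂‖) := by
            have := norm_sub_le (WeakDual.toStrongDual f₁) (WeakDual.toStrongDual f₂)
            linarith
        _ ≤ 2⁻¹ * (1 + 1) := by
            have h1 := (hBd_mem f₁).mp (hSSsub s hf₁)
            have h2 := (hBd_mem f₂).mp (hSSsub sᶜ hf₂)
            linarith
        _ = 1 := by norm_num
    have hc_on_s : ∀ k ∈ s, c ≤ gD (w k) := by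
      intro k hk
      have h1 := hf₁.2.1 k hk
      have h2 := hf₂.2.2 k (by simp [hk])
      rw [happ, hc]
      linarith
    have hzc : c ≤ z gD := by
      refine ge_of_tendsto (heval gD) ?_
      have : ∀ᶠ k in (U : Filter ℕ), k ∈ s := hsU
      exact this.mono fun k hk => hc_on_s k hk
    have hgx₀ : gD x₀ ≤ δ' := by
      rw [happ]
      linarith
    have hsubapp : (z - Jm x₀) gD = z gD - gD x₀ := by
      simp [ContinuousLinearMap.sub_apply, hJm, dual_def]
    have hεb := hbound gD hgD1
    rw [hsubapp] at hεb
    have : c - δ' ≤ ε := by linarith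
    rw [hδ'] at this
    linarith
  · push_neg at HC
    set FS : (P : Set ℕ) → WeakDual ℝ X := fun P => (hSSne P).choose with hFS
    have hFSmem : ∀ P, FS P ∈ SS P := fun P => (hSSne P).choose_spec
    set GN : UIdx U → WeakDual ℝ X × WeakDual ℝ X := fun s => (FS s.1, FS s.1ᶜ) with hGN
    haveI : Nonempty (UIdx U) := inferInstance
    haveI hATne : (atTop : Filter (UIdx U)).NeBot := atTop_neBot
    haveI : (Filter.map GN (atTop : Filter (UIdx U))).NeBot := Filter.map_neBot
    have hprod : IsCompact (Bd ×ˢ Bd) := hBdcomp.prod hBdcomp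
    have hGNmem : ∀ t, GN t ∈ Bd ×ˢ Bd := by
      intro t
      exact ⟨hSSsub _ (hFSmem t.1), hSSsub _ (hFSmem t.1ᶜ)⟩
    obtain ⟨pq, hpqmem, hpqcl⟩ := hprod.exists_clusterPt (f := Filter.map GN atTop)
      (le_principal_iff.mpr (Filter.mem_map.mpr (Filter.Eventually.of_forall hGNmem)))
    have hclosed_mem : ∀ {CC : Set (WeakDual ℝ X × WeakDual ℝ X)}, IsClosed CC →
        (∀ᶠ t in (atTop : Filter (UIdx U)), GN t ∈ CC) → pq ∈ CC := by
      intro CC hCC hev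
      have hmem : CC ∈ Filter.map GN atTop := Filter.mem_map.mpr hev
      have := hpqcl.mono (le_principal_iff.mpr hmem)
      rwa [← mem_closure_iff_clusterPt, hCC.closure_eq] at this
    have hs₀mem : ∀ k : ℕ, ({n | n ≠ k} : Set ℕ) ∈ U := by
      intro k
      have h1 : Set.Ici (k+1) ∈ (atTop : Filter ℕ) := mem_atTop (k+1)
      have h2 : Set.Ici (k+1) ∈ (U : Filter ℕ) := hUle h1
      exact Filter.mem_of_superset h2 (by intro n hn; have := Set.mem_Ici.mp hn; simp only [Set.mem_setOf_eq]; omega)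
    have he1 : ∀ k, pq.1 (w k) ≤ α := by
      intro k
      have hCC : IsClosed {t : WeakDual ℝ X × WeakDual ℝ X | t.1 (w k) ≤ α} :=
        IsClosed.preimage ((WeakDual.eval_continuous (w k)).comp continuous_fst) isClosed_Iic
      refine hclosed_mem hCC ?_
      rw [Filter.eventually_atTop]
      refine ⟨⟨{n | n ≠ k}, hs₀mem k⟩, fun t ht => ?_⟩
      have hknot : k ∉ t.1 := by
        intro hk
        exact (UIdx_le_def ht hk) rfl
      exact (hFSmem t.1).2.2 k hknot
    have he2 : ∀ k, β ≤ pq.2 (w k) := by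
      intro k
      have hCC : IsClosed {t : WeakDual ℝ X × WeakDual ℝ X | β ≤ t.2 (w k)} :=
        IsClosed.preimage ((WeakDual.eval_continuous (w k)).comp continuous_snd) isClosed_Ici
      refine hclosed_mem hCC ?_
      rw [Filter.eventually_atTop]
      refine ⟨⟨{n | n ≠ k}, hs₀mem k⟩, fun t ht => ?_⟩
      have hknot : k ∉ t.1 := by
        intro hk
        exact (UIdx_le_def ht hk) rfl
      exact (hFSmem t.1ᶜ).2.1 k hknot
    have he4 : 2*δ' ≤ pq.1 x₀ - pq.2 x₀ := by
      have hCC : IsClosed {t : WeakDual ℝ X × WeakDual ℝ X | 2*δ' ≤ t.1 x₀ - t.2 x₀} := by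
        have hcont : Continuous fun t : WeakDual ℝ X × WeakDual ℝ X => t.1 x₀ - t.2 x₀ :=
          ((WeakDual.eval_continuous x₀).comp continuous_fst).sub
            ((WeakDual.eval_continuous x₀).comp continuous_snd)
        exact IsClosed.preimage hcont isClosed_Ici
      refine hclosed_mem hCC ?_
      refine Filter.Eventually.of_forall fun t => ?_
      exact le_of_lt (HC t.1 t.2 (FS t.1) (hFSmem t.1) (FS t.1ᶜ) (hFSmem t.1ᶜ))
    have hmem1 : pq.2 ∈ SS Set.univ := by
      refine ⟨hpqmem.2, fun k _ => he2 k, fun k hk => absurd (Set.mem_univ k) hk⟩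
    have hmem2 : pq.1 ∈ SS (Set.univ : Set ℕ)ᶜ := by
      rw [Set.compl_univ]
      exact ⟨hpqmem.1, fun k hk => absurd hk (Set.notMem_empty k), fun k _ => he1 k⟩
    have hfinal := HC Set.univ Filter.univ_mem pq.2 hmem1 pq.1 hmem2
    linarith


/-! ### Part F: the grid lemma and subsequence conversions -/

lemma freq_FF_infinite {A : Set ℕ} {p : ℕ → Prop} (h : ∃ᶠ k in FF A, p k) :
    {k ∈ A | p k}.Infinite := by
  have h2 : ∃ᶠ k in atTop, k ∈ A ∧ p k := by
    rw [Filter.Frequently] at h ⊢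
    rw [FF, eventually_inf_principal] at h
    intro hcon
    apply h
    filter_upwards [hcon] with k hk hkA hpk
    exact hk ⟨hkA, hpk⟩
  exact Nat.frequently_atTop_iff_infinite.mp h2

lemma map_strictMono_atTop {a : ℕ → ℕ} (ha : StrictMono a) :
    Filter.map a atTop = FF (Set.range a) := by
  ext S
  rw [Filter.mem_map, mem_atTop_sets, FF, Filter.mem_inf_principal]
  constructor
  · rintro ⟨m, hm⟩
    rw [mem_atTop_sets]
    refine ⟨a m, fun k hk => ?_⟩
    rintro ⟨j, rfl⟩
    exact hm j (ha.le_iff_le.mp hk)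
  · intro hS
    rw [mem_atTop_sets] at hS
    obtain ⟨n, hn⟩ := hS
    refine ⟨n, fun j hj => ?_⟩
    exact hn (a j) (le_trans hj (ha.le_apply)) ⟨j, rfl⟩

lemma limsup_map_eq (u : ℕ → ℝ) (F : Filter ℕ) (a : ℕ → ℕ) :
    limsup u (Filter.map a F) = limsup (fun k => u (a k)) F := by
  rw [Filter.limsup, Filter.limsup, Filter.map_map]
  rfl

lemma liminf_map_eq (u : ℕ → ℝ) (F : Filter ℕ) (a : ℕ → ℕ) :
    liminf u (Filter.map a F) = liminf (fun k => u (a k)) F := by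
  rw [Filter.liminf, Filter.liminf, Filter.map_map]
  rfl

lemma exists_grid (x : ℕ → X) {C : ℝ} (hxC : ∀ n, ‖x n‖ ≤ C) {B : Set ℕ}
    (hBinf : B.Infinite) {ε ρ θ μ : ℝ} (hθ : θ = (ρ - 2*ε)/4) (hμ : μ = θ/2)
    (hρ : 2*ε < ρ) (N : ℤ) (hN : ⌈C/μ⌉ + 2 ≤ N) (hdelB : ρ ≤ del x B) :
    ∃ q : ℤ × ℤ, q ∈ Finset.Icc (-N) N ×ˢ Finset.Icc (-N) N ∧
      2*ε < ((q.2:ℝ) - (q.1:ℝ)) * μ ∧ PP x ((q.1:ℝ)*μ) ((q.2:ℝ)*μ) ∅ ∅ B := by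
  classical
  haveI := FF_neBot hBinf
  have hC0 : (0:ℝ) ≤ C := le_trans (norm_nonneg _) (hxC 0)
  have hθpos : 0 < θ := by rw [hθ]; linarith
  have hμpos : 0 < μ := by rw [hμ]; linarith
  -- find a functional with large oscillation
  have hex : ∃ f : {f : X →L[ℝ] ℝ // ‖f‖ ≤ 1}, ρ - θ < osc x f.1 B := by
    by_contra hno
    push_neg at hno
    have : del x B ≤ ρ - θ := ciSup_le hno
    linarith
  obtain ⟨⟨f, hf⟩, hosc⟩ := hex
  set b : ℝ := limsup (fun k => f (x k)) (FF B) with hb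
  set a' : ℝ := liminf (fun k => f (x k)) (FF B) with ha'
  have hab : ρ - θ < b - a' := hosc
  have hbC : b ≤ C := limsup_le_C hxC hf hBinf
  have haC : -C ≤ a' := neg_C_le_liminf hxC hf hBinf
  have hab2 : a' ≤ b :=
    liminf_le_limsup (bddUnder_le x hxC hf _) (bddUnder_ge x hxC hf _)
  set i : ℤ := ⌊a'/μ⌋ + 1 with hi
  set j : ℤ := ⌈b/μ⌉ - 1 with hj
  have hia : a' < (i:ℝ)*μ := by
    have h1 : a'/μ < ((i:ℤ):ℝ) := by
      rw [hi]
      push_cast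
      exact Int.lt_floor_add_one _
    calc a' = (a'/μ)*μ := by field_simp
      _ < (i:ℝ)*μ := by
          apply mul_lt_mul_of_pos_right h1 hμpos
  have hia2 : (i:ℝ)*μ ≤ a' + μ := by
    have h1 : ((i:ℤ):ℝ) ≤ a'/μ + 1 := by
      rw [hi]
      push_cast
      have := Int.floor_le (a'/μ)
      linarith
    calc (i:ℝ)*μ ≤ (a'/μ + 1)*μ := mul_le_mul_of_nonneg_right h1 hμpos.le
      _ = a' + μ := by field_simp
  have hjb : (j:ℝ)*μ < b := by
    have h1 : ((j:ℤ):ℝ) < b/μ := by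
      rw [hj]
      push_cast
      have := Int.ceil_lt_add_one (b/μ)
      linarith
    calc (j:ℝ)*μ < (b/μ)*μ := mul_lt_mul_of_pos_right h1 hμpos
      _ = b := by field_simp
  have hjb2 : b - μ ≤ (j:ℝ)*μ := by
    have h1 : b/μ - 1 ≤ ((j:ℤ):ℝ) := by
      rw [hj]
      push_cast
      have := Int.le_ceil (b/μ)
      linarith
    calc b - μ = (b/μ - 1)*μ := by field_simp
      _ ≤ (j:ℝ)*μ := mul_le_mul_of_nonneg_right h1 hμpos.le
  have hgap : 2*ε < ((j:ℝ) - (i:ℝ)) * μ := by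
    have : ((j:ℝ) - (i:ℝ))*μ = (j:ℝ)*μ - (i:ℝ)*μ := by ring
    rw [this]
    have hμθ : μ = θ/2 := hμ
    have hθρ : θ = (ρ - 2*ε)/4 := hθ
    linarith
  have hd1 : -(C/μ) ≤ a'/μ := by
    rw [← neg_div]
    exact (div_le_div_iff_of_pos_right hμpos).mpr haC
  have hd2 : a'/μ ≤ C/μ := (div_le_div_iff_of_pos_right hμpos).mpr (le_trans hab2 hbC)
  have hd3 : -(C/μ) ≤ b/μ := by
    rw [← neg_div]
    exact (div_le_div_iff_of_pos_right hμpos).mpr (le_trans haC hab2)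
  have hd4 : b/μ ≤ C/μ := (div_le_div_iff_of_pos_right hμpos).mpr hbC
  have hmemi : i ∈ Finset.Icc (-N) N := by
    rw [Finset.mem_Icc]
    constructor
    · have h1 : ⌊-(C/μ)⌋ ≤ ⌊a'/μ⌋ := Int.floor_le_floor hd1
      have h2 : ⌊-(C/μ)⌋ = -⌈C/μ⌉ := Int.floor_neg
      rw [hi]
      omega
    · have h1 : ⌊a'/μ⌋ ≤ ⌊C/μ⌋ := Int.floor_le_floor hd2
      have h2 : ⌊C/μ⌋ ≤ ⌈C/μ⌉ := Int.floor_le_ceil _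
      rw [hi]
      omega
  have hmemj : j ∈ Finset.Icc (-N) N := by
    rw [Finset.mem_Icc]
    constructor
    · have h1 : ⌈-(C/μ)⌉ ≤ ⌈b/μ⌉ := Int.ceil_le_ceil hd3
      have h2 : ⌈-(C/μ)⌉ = -⌊C/μ⌋ := Int.ceil_neg
      have h3 : ⌊C/μ⌋ ≤ ⌈C/μ⌉ := Int.floor_le_ceil _
      rw [hj]
      omega
    · have h1 : ⌈b/μ⌉ ≤ ⌈C/μ⌉ := Int.ceil_le_ceil hd4
      rw [hj]
      omega
  refine ⟨(i, j), Finset.mem_product.mpr ⟨hmemi, hmemj⟩, hgap, ?_⟩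
  refine ⟨f, hf, by simp, by simp, ?_, ?_⟩
  · -- top set infinite
    have hfreq : ∃ᶠ k in FF B, (j:ℝ)*μ < f (x k) :=
      frequently_lt_of_lt_limsup ((bddUnder_ge x hxC hf _).isCoboundedUnder_le) hjb
    have := freq_FF_infinite hfreq
    refine this.mono ?_
    rintro k ⟨hkB, hk⟩
    exact ⟨hkB, hk.le⟩
  · -- bottom set infinite
    have hfreq : ∃ᶠ k in FF B, f (x k) < (i:ℝ)*μ :=
      frequently_lt_of_liminf_lt ((bddUnder_le x hxC hf _).isCoboundedUnder_ge) hia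
    have := freq_FF_infinite hfreq
    refine this.mono ?_
    rintro k ⟨hkB, hk⟩
    exact ⟨hkB, hk.le⟩

end RWPaux


theorem relWeaklyCompact_implies_weaklyPrecompact
    {X : Type*} [NormedAddCommGroup X] [NormedSpace ℝ X] [CompleteSpace X]
    (M : Set X) (hM : Bornology.IsBounded M) (ε : ℝ) (hε : 0 ≤ ε)
    (h : IsRelWeaklyCompactWith ε M) :
    IsWeaklyPrecompactWith (2 * ε) M := by
  classical
  obtain ⟨hMb, hclos⟩ := h
  refine ⟨hM, ?_⟩
  intro x hx
  obtain ⟨C₀, hC₀⟩ := isBounded_iff_forall_norm_le.mp hM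
  set C : ℝ := max C₀ 0 with hCdef
  have hxC : ∀ n, ‖x n‖ ≤ C := fun n => le_max_of_le_left (hC₀ _ (hx n))
  obtain ⟨a, ha, hmin⟩ := RWPaux.exists_min_subseq x hxC
  have hA₀inf : (Set.range a).Infinite := Set.infinite_range_of_injective ha.injective
  by_cases hcase : RWPaux.del x (Set.range a) ≤ 2*ε
  · refine ⟨a, ha, ?_⟩
    intro f hf
    have h1 : RWPaux.osc x f (Set.range a) ≤ RWPaux.del x (Set.range a) :=
      RWPaux.osc_le_del hxC hf hA₀inf
    have h2 : Filter.limsup (fun n => f (x (a n))) Filter.atTop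
        = Filter.limsup (fun k => f (x k)) (RWPaux.FF (Set.range a)) := by
      rw [← RWPaux.map_strictMono_atTop ha, RWPaux.limsup_map_eq]
    have h3 : Filter.liminf (fun n => f (x (a n))) Filter.atTop
        = Filter.liminf (fun k => f (x k)) (RWPaux.FF (Set.range a)) := by
      rw [← RWPaux.map_strictMono_atTop ha, RWPaux.liminf_map_eq]
    show Filter.limsup (fun n => f (x (a n))) Filter.atTop
        - Filter.liminf (fun n => f (x (a n))) Filter.atTop ≤ 2*ε
    rw [h2, h3]
    calc Filter.limsup (fun k => f (x k)) (RWPaux.FF (Set.range a))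
        - Filter.liminf (fun k => f (x k)) (RWPaux.FF (Set.range a))
        = RWPaux.osc x f (Set.range a) := rfl
      _ ≤ RWPaux.del x (Set.range a) := h1
      _ ≤ 2*ε := hcase
  · push_neg at hcase
    exfalso
    set ρ : ℝ := RWPaux.del x (Set.range a) with hρdef
    set θ : ℝ := (ρ - 2*ε)/4 with hθdef
    set μ : ℝ := θ/2 with hμdef
    set N : ℤ := ⌈C/μ⌉ + 2 with hNdef
    set Act' : ℤ × ℤ → Set ℕ → Prop := fun q B =>
      (2*ε < ((q.2:ℝ) - (q.1:ℝ)) * μ) ∧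
        RWPaux.PP x ((q.1:ℝ)*μ) ((q.2:ℝ)*μ) ∅ ∅ B with hAct
    have hmono : ∀ q B B', B ⊆ B' → Act' q B → Act' q B' := fun q B B' hsub hA =>
      ⟨hA.1, RWPaux.PP_mono hsub hA.2⟩
    have hAll : ∀ B, B ⊆ Set.range a → B.Infinite →
        ∃ q ∈ Finset.Icc (-N) N ×ˢ Finset.Icc (-N) N, Act' q B := by
      intro B hBsub hBinf
      obtain ⟨q, hq1, hq2, hq3⟩ := RWPaux.exists_grid x hxC hBinf hθdef hμdef hcase N
        le_rfl (hmin B hBsub hBinf)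
      exact ⟨q, hq1, hq2, hq3⟩
    obtain ⟨q, hqG, T, hTsub, hTinf, hHered⟩ :=
      RWPaux.KL Act' hmono (Finset.Icc (-N) N ×ˢ Finset.Icc (-N) N)
        (Set.range a) hA₀inf hAll
    have hgap : 2*ε < (q.2:ℝ)*μ - (q.1:ℝ)*μ := by
      have hg := (hHered T subset_rfl hTinf).1
      rw [sub_mul] at hg
      exact hg
    have hact : ∀ B, B ⊆ T → B.Infinite →
        RWPaux.PP x ((q.1:ℝ)*μ) ((q.2:ℝ)*μ) ∅ ∅ B :=
      fun B h1 h2 => (hHered B h1 h2).2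
    obtain ⟨κ, hκ, FIN⟩ := RWPaux.exists_indep x ((q.1:ℝ)*μ) ((q.2:ℝ)*μ) hTinf hact
    exact RWPaux.no_indep M ε hclos (fun k => x (κ k)) (fun k => hx _)
      (fun k => hxC _) _ _ hgap FIN
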